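/- Let (Ω, μ) be a probability measure space and let 0 < p < 1 be a real number. Let f : Ω → ℝ be a nonnegative function with f ∈ L^p(μ) ∩ L^1(μ) and ∫_Ω f dμ > 0. Then (1/(p−1)) · ( (∫_Ω f^p dμ) / (∫_Ω f dμ)^p − 1 ) ≥ ((p+1)^{p+1}/(8 p^{p−1})) · ( ∫_Ω | f/(∫_Ω f dμ) − 1 | dμ )². -/

import Mathlib

open MeasureTheory Real

set_option maxHeartbeats 1000000


-- (1+1/p)^p ≤ 2 style: 1 + r ≤ 2 ^ r for r ≥ 1
lemma two_rpow_ge (r : ℝ) (hr : 1 ≤ r) : 1 + r ≤ (2:ℝ) ^ r := by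
  have h2 : (0:ℝ) < 2 := by norm_num
  have : (2:ℝ) ^ r = Real.exp (r * Real.log 2) := by
    rw [Real.rpow_def_of_pos h2, mul_comm]
  rw [this]
  have hsplit : r * Real.log 2 = Real.log 2 + (r - 1) * Real.log 2 := by ring
  rw [hsplit, Real.exp_add, Real.exp_log h2]
  have h1 : 1 + (r - 1) * Real.log 2 ≤ Real.exp ((r - 1) * Real.log 2) := by
    have := Real.add_one_le_exp ((r - 1) * Real.log 2)
    linarith
  have hlog : (0.6931471803 : ℝ) < Real.log 2 := Real.log_two_gt_d9
  nlinarith [Real.exp_pos ((r - 1) * Real.log 2)]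

lemma cp_le (p : ℝ) (hp0 : 0 < p) (hp1 : p < 1) :
    (p+1) ^ (p+1) / (8 * p ^ (p-1)) ≤ p * (p+1) / 4 := by
  have hp1' : (0:ℝ) < p + 1 := by linarith
  have h1 : ((p+1)/p : ℝ) ≤ (2:ℝ) ^ (1/p) := by
    have := two_rpow_ge (1/p) (by rw [le_div_iff₀ hp0]; linarith)
    have : 1 + 1/p ≤ (2:ℝ) ^ (1/p) := this
    have he : (p+1)/p = 1 + 1/p := by field_simp
    linarith [he ▸ this]
  have h2 : ((p+1)/p : ℝ) ^ p ≤ 2 := by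
    calc ((p+1)/p) ^ p ≤ ((2:ℝ) ^ (1/p)) ^ p :=
          Real.rpow_le_rpow (by positivity) h1 hp0.le
      _ = (2:ℝ) ^ ((1/p) * p) := (Real.rpow_mul (by norm_num) (1/p) p).symm
      _ = 2 := by rw [one_div, inv_mul_cancel₀ hp0.ne', Real.rpow_one]
  -- now conclude
  have hd : ((p+1)/p : ℝ) ^ p = (p+1)^p / p^p := Real.div_rpow hp1'.le hp0.le p
  have hppos : (0:ℝ) < p ^ p := Real.rpow_pos_of_pos hp0 p
  have hnum : (p+1:ℝ) ^ (p+1) = (p+1)^p * (p+1) := by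
    rw [Real.rpow_add hp1', Real.rpow_one]
  have hden : (p:ℝ) ^ (p-1) = p^p / p := by
    rw [Real.rpow_sub hp0, Real.rpow_one]
  rw [hnum, hden]
  rw [hd] at h2
  have h3 : (p+1:ℝ)^p ≤ 2 * p^p := by
    rw [div_le_iff₀ hppos] at h2; linarith
  have h4 : (0:ℝ) < (p+1:ℝ)^p := Real.rpow_pos_of_pos hp1' p
  rw [div_le_div_iff₀ (by positivity) (by norm_num)]
  have he : p * (p+1) * (8 * (p ^ p / p)) = 8 * p^p * (p+1) := by field_simp
  rw [he]
  nlinarith [h3, hp1'.le]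


lemma key1 (q s : ℝ) (hq0 : 0 < q) (hq1 : q < 1) (hs : 0 ≤ s) :
    s ^ q * ((2 - q) - 2*q*s) ≤ 2 - 3*q + 3/2*q^2 := by
  have hRpos : (0:ℝ) < 2 - 3*q + 3/2*q^2 := by nlinarith
  rcases le_or_gt ((2 - q) - 2*q*s) 0 with h | h
  · have : s ^ q * ((2 - q) - 2*q*s) ≤ 0 :=
      mul_nonpos_of_nonneg_of_nonpos (Real.rpow_nonneg hs q) h
    linarith
  have hq1' : (0:ℝ) < q + 1 := by linarith
  have hw : q/(q+1) + 1/(q+1) = 1 := by field_simp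
  have hgm := Real.geom_mean_le_arith_mean2_weighted
    (by positivity : (0:ℝ) ≤ q/(q+1)) (by positivity : (0:ℝ) ≤ 1/(q+1))
    (by positivity : (0:ℝ) ≤ 2*s) h.le hw
  have harith : q/(q+1)*(2*s) + 1/(q+1)*((2 - q) - 2*q*s) = (2-q)/(q+1) := by
    field_simp; ring
  rw [harith] at hgm
  have hbase_nonneg : (0:ℝ) ≤ (2*s) ^ (q/(q+1)) * ((2 - q) - 2*q*s) ^ (1/(q+1)) := by
    positivity
  have hpow := Real.rpow_le_rpow hbase_nonneg hgm (by positivity : (0:ℝ) ≤ q+1)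
  have hlhs : ((2*s) ^ (q/(q+1)) * ((2 - q) - 2*q*s) ^ (1/(q+1))) ^ (q+1)
      = (2*s) ^ q * ((2 - q) - 2*q*s) := by
    rw [Real.mul_rpow (by positivity) (by positivity),
      ← Real.rpow_mul (by positivity), ← Real.rpow_mul h.le,
      div_mul_cancel₀ _ hq1'.ne', one_div, inv_mul_cancel₀ hq1'.ne', Real.rpow_one]
  rw [hlhs] at hpow
  have h2s : (2*s) ^ q = 2^q * s^q := Real.mul_rpow (by norm_num) hs
  rw [h2s] at hpow
  have h2q : (0:ℝ) < 2 - q := by linarith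
  obtain ⟨t, ht⟩ : ∃ t : ℝ, t = (2-q)/(2*(q+1)) := ⟨_, rfl⟩
  have htpos : 0 < t := by rw [ht]; positivity
  have hM : ((2-q)/(q+1)) ^ (q+1) = (2-q)/(q+1) * 2^q * t ^ q := by
    rw [Real.rpow_add (by positivity), Real.rpow_one]
    have hbase : t = ((2-q)/(q+1))/2 := by rw [ht, div_div, mul_comm]
    have h2 : t ^ q = ((2-q)/(q+1)) ^ q / 2 ^ q := by
      rw [hbase, Real.div_rpow (by positivity) (by norm_num)]
    rw [h2]
    field_simp
  have hstar : t ^ q ≤ 2*(q+1)/(2+2*q+3*q^2) := by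
    have hlog : Real.log t ≤ t - 1 := Real.log_le_sub_one_of_pos htpos
    have h1 : t ^ q = Real.exp (q * Real.log t) := by
      rw [Real.rpow_def_of_pos htpos, mul_comm]
    have h2 : Real.exp (q * Real.log t) ≤ Real.exp (q * (t-1)) :=
      Real.exp_le_exp.2 (by nlinarith)
    have ht1 : t ≤ 1 := by rw [ht, div_le_one (by positivity)]; nlinarith
    have hpos' : 0 < 1 - q*(t-1) := by nlinarith
    have hb : 1 - q*(t-1) ≤ (Real.exp (q*(t-1)))⁻¹ := by
      have := Real.add_one_le_exp (-(q*(t-1)))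
      rw [Real.exp_neg] at this
      linarith
    have h3 : Real.exp (q * (t-1)) ≤ (1 - q*(t-1))⁻¹ := by
      have hmul : Real.exp (q*(t-1)) * (1 - q*(t-1)) ≤ 1 := by
        have he := Real.exp_pos (q*(t-1))
        have := mul_le_mul_of_nonneg_left hb he.le
        rw [mul_inv_cancel₀ he.ne'] at this
        linarith
      rw [inv_eq_one_div, le_div_iff₀ hpos']
      linarith
    have hden : 1 - q*(t-1) = (2+2*q+3*q^2)/(2*(q+1)) := by
      rw [ht]; field_simp; ring
    have h4 : (1 - q*(t-1))⁻¹ = 2*(q+1)/(2+2*q+3*q^2) := by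
      rw [hden, inv_div]
    calc t ^ q = Real.exp (q * Real.log t) := h1
      _ ≤ Real.exp (q * (t-1)) := h2
      _ ≤ (1 - q*(t-1))⁻¹ := h3
      _ = 2*(q+1)/(2+2*q+3*q^2) := h4
  have h2qpos : (0:ℝ) < 2^q := Real.rpow_pos_of_pos (by norm_num) q
  have h5 : 2^q * (s^q * ((2 - q) - 2*q*s)) ≤ 2^q * ((2-q)/(q+1) * t^q) := by
    calc 2^q * (s^q * ((2 - q) - 2*q*s)) = 2^q * s^q * ((2 - q) - 2*q*s) := by ring
      _ ≤ ((2-q)/(q+1)) ^ (q+1) := hpow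
      _ = 2^q * ((2-q)/(q+1) * t^q) := by rw [hM]; ring
  have h6 : s^q * ((2 - q) - 2*q*s) ≤ (2-q)/(q+1) * t^q :=
    le_of_mul_le_mul_left h5 h2qpos
  have h7 : (2-q)/(q+1) * t^q ≤ (2-q)/(q+1) * (2*(q+1)/(2+2*q+3*q^2)) :=
    mul_le_mul_of_nonneg_left hstar (by positivity)
  have hfin : (2-q)/(q+1) * (2*(q+1)/(2+2*q+3*q^2)) ≤ 2 - 3*q + 3/2*q^2 := by
    rw [div_mul_div_comm, div_le_iff₀ (by positivity)]
    have hq2 : (0:ℝ) < 2-4*q+3*q^2 := by nlinarith [sq_nonneg (3*q-2)]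
    have hid : (2-3*q+3/2*q^2)*((q+1)*(2+2*q+3*q^2)) - (2-q)*(2*(q+1))
        = 3/2*q^2*(q+1)*(2-4*q+3*q^2) := by ring
    nlinarith [mul_nonneg (mul_nonneg (by positivity : (0:ℝ) ≤ 3/2*q^2) hq1'.le) hq2.le]
  linarith


noncomputable def Gfun (p x : ℝ) : ℝ :=
  (x+2)*(1+p*(x-1)-x^p) - 3/4*p*(1-p)*(1+p)*(x-1)^2

noncomputable def G1fun (p x : ℝ) : ℝ :=
  (1+p*(x-1)-x^p) + (x+2)*(p - p*x^(p-1)) - 3/2*p*(1-p)*(1+p)*(x-1)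

noncomputable def G2fun (p x : ℝ) : ℝ :=
  2*(p - p*x^(p-1)) + p*(1-p)*x^(p-2)*(x+2) - 3/2*p*(1-p)*(1+p)

lemma key2 (p x : ℝ) (hp0 : 0 < p) (hp1 : p < 1) (hx : 0 < x) :
    0 ≤ G2fun p x := by
  have hs0 : (0:ℝ) < x⁻¹ := inv_pos.2 hx
  have h1 : x⁻¹^(1-p) = x^(p-1) := by
    rw [Real.inv_rpow hx.le, ← Real.rpow_neg hx.le]
    congr 1; ring
  have h2 : x⁻¹^(1-p) * x⁻¹ = x^(p-2) := by
    rw [h1, ← Real.rpow_neg_one x, ← Real.rpow_add hx]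
    congr 1; ring
  have hk := key1 (1-p) x⁻¹ (by linarith) (by linarith) hs0.le
  have hsx : x⁻¹ * x = 1 := inv_mul_cancel₀ hx.ne'
  unfold G2fun
  rw [← h1, ← h2]
  have hexp2 : p*(1-p)*(x⁻¹^(1-p)*x⁻¹)*(x+2)
      = p*(1-p)*x⁻¹^(1-p) + 2*(p*(1-p)*(x⁻¹^(1-p)*x⁻¹)) := by
    have hh : p*(1-p)*(x⁻¹^(1-p)*x⁻¹)*(x+2)
        = p*(1-p)*(x⁻¹^(1-p)*(x⁻¹*x)) + 2*(p*(1-p)*(x⁻¹^(1-p)*x⁻¹)) := by ring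
    rw [hh, hsx, mul_one]
  rw [hexp2]
  nlinarith [mul_le_mul_of_nonneg_left hk hp0.le]

lemma hasDeriv_G (p y : ℝ) (hy : 0 < y) :
    HasDerivAt (Gfun p) (G1fun p y) y := by
  have hrp : HasDerivAt (fun z : ℝ => z^p) (p*y^(p-1)) y :=
    Real.hasDerivAt_rpow_const (Or.inl hy.ne')
  have h1 : HasDerivAt (fun z : ℝ => 1+p*(z-1)-z^p) (p - p*y^(p-1)) y := by
    have := ((((hasDerivAt_id y).sub_const 1).const_mul p).const_add 1).sub hrp
    simpa [Pi.sub_def] using this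
  have h2 : HasDerivAt (fun z : ℝ => z+2) 1 y := (hasDerivAt_id y).add_const 2
  have hsq : HasDerivAt (fun z : ℝ => 3/4*p*(1-p)*(1+p)*(z-1)^2)
      (3/4*p*(1-p)*(1+p)*(2*(y-1))) y := by
    have := (((hasDerivAt_id y).sub_const 1).pow 2).const_mul (3/4*p*(1-p)*(1+p))
    simpa using this
  have := (h2.mul h1).sub hsq
  refine this.congr_deriv ?_
  unfold G1fun
  ring

lemma hasDeriv_G1 (p y : ℝ) (hy : 0 < y) :
    HasDerivAt (G1fun p) (G2fun p y) y := by
  have hrp : HasDerivAt (fun z : ℝ => z^p) (p*y^(p-1)) y :=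
    Real.hasDerivAt_rpow_const (Or.inl hy.ne')
  have hrp1 : HasDerivAt (fun z : ℝ => z^(p-1)) ((p-1)*y^(p-2)) y := by
    have := Real.hasDerivAt_rpow_const (x := y) (p := p-1) (Or.inl hy.ne')
    have he : p - 1 - 1 = p - 2 := by ring
    rwa [he] at this
  have h1 : HasDerivAt (fun z : ℝ => 1+p*(z-1)-z^p) (p - p*y^(p-1)) y := by
    have := ((((hasDerivAt_id y).sub_const 1).const_mul p).const_add 1).sub hrp
    simpa [Pi.sub_def] using this
  have h2 : HasDerivAt (fun z : ℝ => z+2) 1 y := (hasDerivAt_id y).add_const 2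
  have h3 : HasDerivAt (fun z : ℝ => p - p*z^(p-1)) (-(p*((p-1)*y^(p-2)))) y := by
    have := (hrp1.const_mul p).const_sub p
    simpa using this
  have hlin : HasDerivAt (fun z : ℝ => 3/2*p*(1-p)*(1+p)*(z-1)) (3/2*p*(1-p)*(1+p)) y := by
    have := ((hasDerivAt_id y).sub_const 1).const_mul (3/2*p*(1-p)*(1+p))
    simpa using this
  have := (h1.add (h2.mul h3)).sub hlin
  refine this.congr_deriv ?_
  unfold G2fun
  ring

lemma key3 (p : ℝ) (hp0 : 0 < p) (hp1 : p < 1) (x : ℝ) (hx : 0 ≤ x) :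
    3/4*p*(1-p)*(1+p)*(x-1)^2 ≤ (x+2)*(1+p*(x-1)-x^p) := by
  have hGcont : Continuous fun y : ℝ => Gfun p y := by
    have hc : Continuous fun y : ℝ => y ^ p := by
      rw [continuous_iff_continuousAt]
      exact fun y => Real.continuousAt_rpow_const y p (Or.inr hp0.le)
    unfold Gfun
    fun_prop
  have hG1 : G1fun p 1 = 0 := by
    unfold G1fun; simp [Real.one_rpow]
  have hGone : Gfun p 1 = 0 := by
    unfold Gfun; simp [Real.one_rpow]
  have hmono1 : MonotoneOn (G1fun p) (Set.Ioi 0) := by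
    apply monotoneOn_of_deriv_nonneg (convex_Ioi 0)
    · exact fun y hy => ((hasDeriv_G1 p y hy).continuousAt).continuousWithinAt
    · intro y hy
      rw [interior_Ioi] at hy
      exact (hasDeriv_G1 p y hy).differentiableAt.differentiableWithinAt
    · intro y hy
      rw [interior_Ioi] at hy
      rw [(hasDeriv_G1 p y hy).deriv]
      exact key2 p y hp0 hp1 hy
  have hsuff : 0 ≤ Gfun p x := by
    rcases eq_or_lt_of_le hx with h0 | hxpos
    · unfold Gfun
      rw [← h0, Real.zero_rpow hp0.ne']
      nlinarith [mul_nonneg (mul_nonneg hp0.le (by linarith : (0:ℝ) ≤ 1-p)) (by linarith : (0:ℝ) ≤ 1+p), mul_pos hp0 (by linarith : (0:ℝ) < 1-p)]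
    rcases le_or_gt x 1 with hx1 | hx1
    · -- antitone on Icc 0 1
      have hanti : AntitoneOn (Gfun p) (Set.Icc 0 1) := by
        apply antitoneOn_of_deriv_nonpos (convex_Icc 0 1) hGcont.continuousOn
        · intro y hy
          rw [interior_Icc] at hy
          exact (hasDeriv_G p y hy.1).differentiableAt.differentiableWithinAt
        · intro y hy
          rw [interior_Icc] at hy
          rw [(hasDeriv_G p y hy.1).deriv]
          have := hmono1 (Set.mem_Ioi.2 hy.1) (Set.mem_Ioi.2 one_pos) hy.2.le
          rw [hG1] at this
          exact this
      have := hanti (Set.mem_Icc.2 ⟨hx, hx1⟩) (Set.mem_Icc.2 ⟨zero_le_one, le_refl 1⟩) hx1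
      rw [hGone] at this
      exact this
    · have hmonoG : MonotoneOn (Gfun p) (Set.Ici 1) := by
        apply monotoneOn_of_deriv_nonneg (convex_Ici 1) hGcont.continuousOn
        · intro y hy
          rw [interior_Ici] at hy
          exact (hasDeriv_G p y (lt_trans one_pos hy)).differentiableAt.differentiableWithinAt
        · intro y hy
          rw [interior_Ici] at hy
          rw [(hasDeriv_G p y (lt_trans one_pos hy)).deriv]
          have := hmono1 (Set.mem_Ioi.2 one_pos) (Set.mem_Ioi.2 (lt_trans one_pos hy)) (le_of_lt hy)
          rw [hG1] at this
          exact this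
      have := hmonoG (Set.mem_Ici.2 (le_refl 1)) (Set.mem_Ici.2 hx1.le) hx1.le
      rw [hGone] at this
      exact this
  unfold Gfun at hsuff
  linarith


theorem stmt_1 {Ω : Type*} [MeasurableSpace Ω] (μ : Measure Ω) [IsProbabilityMeasure μ]
    (p : ℝ) (hp0 : 0 < p) (hp1 : p < 1) (f : Ω → ℝ) (hf0 : ∀ x, 0 ≤ f x)
    (hfp : Integrable (fun x => f x ^ p) μ) (hf1 : Integrable f μ)
    (hpos : 0 < ∫ x, f x ∂μ) :
    (1 / (p - 1)) * ((∫ x, f x ^ p ∂μ) / (∫ x, f x ∂μ) ^ p - 1) ≥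
      ((p + 1) ^ (p + 1) / (8 * p ^ (p - 1))) *
        (∫ x, |f x / (∫ y, f y ∂μ) - 1| ∂μ) ^ 2 := by
  have hq : (0:ℝ) < 1 - p := by linarith
  set I : ℝ := ∫ x, f x ∂μ with hIdef
  set c : ℝ := (p+1) ^ (p+1) / (8 * p ^ (p-1)) with hcdef
  have hcpos : 0 < c := by
    rw [hcdef]
    have h1 : (0:ℝ) < (p+1)^(p+1) := Real.rpow_pos_of_pos (by linarith) _
    have h2 : (0:ℝ) < p^(p-1) := Real.rpow_pos_of_pos hp0 _
    positivity
  have hcle : c ≤ p * (p+1) / 4 := cp_le p hp0 hp1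
  set g : Ω → ℝ := fun ω => f ω / I with hgdef
  have hg0 : ∀ ω, 0 ≤ g ω := fun ω => div_nonneg (hf0 ω) hpos.le
  have hgI : Integrable g μ := hf1.div_const I
  have hgaesm : AEStronglyMeasurable g μ := hgI.aestronglyMeasurable
  have hgint : ∫ ω, g ω ∂μ = 1 := by
    rw [hgdef]
    simp only
    rw [integral_div]
    exact div_self hpos.ne'
  have hgp_eq : (fun ω => g ω ^ p) = fun ω => f ω ^ p / I ^ p :=
    funext fun ω => Real.div_rpow (hf0 ω) hpos.le p
  have hgpI : Integrable (fun ω => g ω ^ p) μ := by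
    rw [hgp_eq]; exact hfp.div_const _
  have hgpint : ∫ ω, g ω ^ p ∂μ = (∫ x, f x ^ p ∂μ) / I ^ p := by
    rw [hgp_eq]; exact integral_div _ _
  -- N
  set N : Ω → ℝ := fun ω => 1 + p*(g ω - 1) - g ω ^ p with hNdef
  have hgm1 : Integrable (fun ω => g ω - 1) μ := hgI.sub (integrable_const 1)
  have hNb : Integrable (fun ω => p * (g ω - 1)) μ := hgm1.const_mul p
  have hNa : Integrable (fun ω => 1 + p * (g ω - 1)) μ := (integrable_const 1).add hNb
  have hNint : Integrable N μ := hNa.sub hgpI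
  have hNval : ∫ ω, N ω ∂μ = 1 - ∫ ω, g ω ^ p ∂μ := by
    have hNshape : (fun ω => N ω) = fun ω => (1 + p * (g ω - 1)) - g ω ^ p := rfl
    rw [hNshape, integral_sub hNa hgpI, integral_add (integrable_const 1) hNb,
      integral_const_mul, integral_sub hgI (integrable_const 1), hgint]
    simp [measure_univ]
  -- v2
  set v2 : Ω → ℝ := fun ω => 3*((g ω - 1)*(g ω - 1))/(g ω + 2) with hv2def
  have hgp2 : ∀ ω, (0:ℝ) < g ω + 2 := fun ω => by have := hg0 ω; linarith
  have hv2nonneg : ∀ ω, 0 ≤ v2 ω := fun ω => by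
    have := hgp2 ω
    simp only [hv2def]
    exact div_nonneg (by nlinarith [mul_self_nonneg (g ω - 1)]) (hgp2 ω).le
  have hkey : ∀ ω, (1-p)*c*v2 ω ≤ N ω := by
    intro ω
    have hk := key3 p hp0 hp1 (g ω) (hg0 ω)
    have hc3 : 3*((1-p)*c) ≤ 3/4*p*(1-p)*(1+p) := by nlinarith
    have h2 := hgp2 ω
    rw [hv2def, hNdef]
    simp only
    rw [mul_div_assoc', div_le_iff₀ h2]
    nlinarith [mul_le_mul_of_nonneg_right hc3 (mul_self_nonneg (g ω - 1))]
  have hgae : AEMeasurable g μ := hgI.aemeasurable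
  have hv2meas : AEStronglyMeasurable v2 μ := by
    rw [hv2def]
    exact ((aemeasurable_const.mul ((hgae.sub aemeasurable_const).mul
      (hgae.sub aemeasurable_const))).div (hgae.add aemeasurable_const)).aestronglyMeasurable
  have hv2int : Integrable v2 μ := by
    apply Integrable.mono' (hNint.div_const ((1-p)*c)) hv2meas
    filter_upwards with ω
    rw [Real.norm_eq_abs, abs_of_nonneg (hv2nonneg ω), le_div_iff₀ (by positivity)]
    linarith [hkey ω]
  -- u, v
  set u : Ω → ℝ := fun ω => Real.sqrt ((g ω + 2)/3) with hudef
  have hu2 : ∀ ω, u ω^2 = (g ω + 2)/3 := fun ω =>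
    Real.sq_sqrt (by have := hgp2 ω; positivity)
  have hupos : ∀ ω, 0 < u ω := fun ω =>
    Real.sqrt_pos.2 (by have := hgp2 ω; positivity)
  set v : Ω → ℝ := fun ω => |g ω - 1| / u ω with hvdef
  have huv : ∀ ω, u ω * v ω = |g ω - 1| := fun ω => by
    simp only [hvdef]
    rw [mul_comm]
    exact div_mul_cancel₀ _ (hupos ω).ne'
  have hvsq : ∀ ω, v ω^2 = v2 ω := by
    intro ω
    rw [hvdef, hv2def]
    simp only
    rw [div_pow, hu2, sq_abs, div_div_eq_mul_div]
    have h2 := (hgp2 ω).ne'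
    field_simp
  set m : ℝ := ∫ ω, |g ω - 1| ∂μ with hmdef
  have habs_int : Integrable (fun ω => |g ω - 1|) μ := (hgI.sub (integrable_const 1)).abs
  have hu2int : Integrable (fun ω => (g ω + 2)/3) μ :=
    (hgI.add (integrable_const 2)).div_const 3
  have hu2val : ∫ ω, (g ω + 2)/3 ∂μ = 1 := by
    rw [integral_div, integral_add hgI (integrable_const 2), hgint]
    simp [measure_univ]
    norm_num
  have hExpand : (fun ω => (v ω - m*u ω)^2)
      = fun ω => v2 ω - (2*m)*|g ω - 1| + m^2*((g ω + 2)/3) := by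
    funext ω
    calc (v ω - m*u ω)^2 = v ω^2 - (2*m)*(u ω * v ω) + m^2*(u ω^2) := by ring
      _ = v2 ω - (2*m)*|g ω - 1| + m^2*((g ω + 2)/3) := by rw [hvsq, huv, hu2]
  have hCS : m^2 ≤ ∫ ω, v2 ω ∂μ := by
    have h0 : 0 ≤ ∫ ω, (v ω - m*u ω)^2 ∂μ := integral_nonneg fun ω => sq_nonneg _
    rw [hExpand] at h0
    have h1 : Integrable (fun ω => v2 ω - (2*m)*|g ω - 1|) μ :=
      hv2int.sub (habs_int.const_mul (2*m))
    rw [integral_add h1 (hu2int.const_mul (m^2)),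
      integral_sub hv2int (habs_int.const_mul (2*m)),
      integral_const_mul, integral_const_mul, hu2val, ← hmdef] at h0
    nlinarith [h0]
  -- combine
  have hmono : ∫ ω, ((1-p)*c)*v2 ω ∂μ ≤ ∫ ω, N ω ∂μ :=
    integral_mono (hv2int.const_mul _) hNint hkey
  rw [integral_const_mul, hNval] at hmono
  have hchain : (1-p)*c*m^2 ≤ 1 - ∫ ω, g ω ^ p ∂μ := by
    calc (1-p)*c*m^2 ≤ (1-p)*c*∫ ω, v2 ω ∂μ :=
          mul_le_mul_of_nonneg_left hCS (by positivity)
      _ ≤ 1 - ∫ ω, g ω ^ p ∂μ := hmono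
  -- finish
  rw [ge_iff_le, ← hgpint]
  have hfin : (1:ℝ)/(p-1)*((∫ ω, g ω ^ p ∂μ) - 1) = (1 - ∫ ω, g ω ^ p ∂μ)/(1-p) := by
    have : p - 1 ≠ 0 := by linarith
    field_simp
    ring
  rw [hfin, le_div_iff₀ hq]
  linarith [hchain]
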